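/- Let l be an even integer with l > 4. For b ∈ ℝ∖{0,−1} define W_+(b) = i^{l/2}·(1+b)^{−l/2}·∫₀^∞ (t+i)^{−l/2}·(t + bi/(b+1))^{−l/2}·t^{l/2−1}·log t dt. Then for all b ∈ ℝ∖{0,−1}: |W_+(b)| ≤ |2b(b+1)|^{−l/4} · ∫₀^∞ t^{l/4}·(t²+1)^{−l/4}·|log t| dt/t, and the latter integral is finite. -/

import Mathlib

/- Statement 18 (from the proof of Lemma `Est-arci-log`): for `l` even, `l > 4`,
   `|W₊(b)| ≤ |2b(b+1)|^{−l/4} ∫₀^∞ t^{l/4}(t²+1)^{−l/4}|log t| dt/t` for all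
   `b ∈ ℝ∖{0,−1}`, and the latter integral is finite. -/

open Complex MeasureTheory

namespace Stmt18

/-- `W₊(b) = i^{l/2}(1+b)^{−l/2} ∫₀^∞ (t+i)^{−l/2}(t+bi/(b+1))^{−l/2} t^{l/2−1} log t dt`. -/
noncomputable def Wplus (l : ℤ) (b : ℝ) : ℂ :=
  I ^ (l / 2) * ((1 : ℂ) + (b : ℂ)) ^ (-(l / 2)) *
    ∫ t in Set.Ioi (0 : ℝ),
      ((t : ℂ) + I) ^ (-(l / 2)) * ((t : ℂ) + (b : ℂ) * I / ((b : ℂ) + 1)) ^ (-(l / 2)) *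
        (t : ℂ) ^ (l / 2 - 1) * (Real.log t : ℂ)

/-- `|log t| ≤ 2(t^{1/2} + t^{-1/2})` for `t > 0`. -/
lemma abs_log_le (t : ℝ) (ht : 0 < t) :
    |Real.log t| ≤ 2 * (t ^ (1/2 : ℝ) + t ^ (-(1/2) : ℝ)) := by
  have h1 : (0:ℝ) ≤ t ^ (1/2 : ℝ) := Real.rpow_nonneg ht.le _
  have h2 : (0:ℝ) ≤ t ^ (-(1/2) : ℝ) := Real.rpow_nonneg ht.le _
  rcases le_or_gt 1 t with h | h
  · rw [_root_.abs_of_nonneg (Real.log_nonneg h)]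
    nlinarith [Real.log_le_rpow_div ht.le (show (0:ℝ) < 1/2 by norm_num)]
  · rw [_root_.abs_of_nonpos (Real.log_nonpos ht.le h.le), ← Real.log_inv]
    have := Real.log_le_rpow_div (inv_nonneg.2 ht.le) (by norm_num : (0:ℝ) < 1/2)
    rw [Real.inv_rpow ht.le, ← Real.rpow_neg ht.le] at this
    nlinarith

/-- Integrability of `t^c (t²+1)^{-r}` on `(0,∞)`. -/
lemma integrable_aux (r c : ℝ) (hr : 0 ≤ r) (hc : -1 < c) (h2 : c - 2*r < -1) :
    IntegrableOn (fun t : ℝ => t ^ c * (t ^ 2 + 1) ^ (-r)) (Set.Ioi 0) := by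
  have hcont : ContinuousOn (fun t : ℝ => t ^ c * (t ^ 2 + 1) ^ (-r)) (Set.Ioi 0) := by
    apply ContinuousOn.mul
    · exact ContinuousOn.rpow_const continuousOn_id fun x hx => Or.inl (ne_of_gt hx)
    · exact ContinuousOn.rpow_const (by fun_prop) fun x hx => Or.inl (by positivity)
  rw [← Set.Ioc_union_Ioi_eq_Ioi (zero_le_one (α := ℝ))]
  apply IntegrableOn.union
  · have hint : IntegrableOn (fun t : ℝ => t ^ c) (Set.Ioc (0:ℝ) 1) := by
      have := intervalIntegral.intervalIntegrable_rpow' (a := (0:ℝ)) (b := 1) hc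
      rwa [intervalIntegrable_iff_integrableOn_Ioc_of_le zero_le_one] at this
    apply hint.mono'
      ((hcont.mono Set.Ioc_subset_Ioi_self).aestronglyMeasurable measurableSet_Ioc)
    filter_upwards [ae_restrict_mem measurableSet_Ioc] with t ht
    have ht0 : 0 < t := ht.1
    rw [Real.norm_eq_abs, _root_.abs_of_nonneg (by positivity)]
    have : (t^2+1:ℝ) ^ (-r) ≤ 1 :=
      Real.rpow_le_one_of_one_le_of_nonpos (by nlinarith) (by linarith)
    nlinarith [Real.rpow_nonneg ht0.le c]
  · have hint : IntegrableOn (fun t : ℝ => t ^ (c - 2*r)) (Set.Ioi (1:ℝ)) :=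
      integrableOn_Ioi_rpow_of_lt h2 one_pos
    apply hint.mono'
      ((hcont.mono (Set.Ioi_subset_Ioi zero_le_one)).aestronglyMeasurable measurableSet_Ioi)
    filter_upwards [ae_restrict_mem measurableSet_Ioi] with t ht
    have ht0 : (0:ℝ) < t := lt_trans one_pos ht
    rw [Real.norm_eq_abs, _root_.abs_of_nonneg (by positivity)]
    have h3 : (t^2+1:ℝ) ^ (-r) ≤ (t^2) ^ (-r) :=
      Real.rpow_le_rpow_of_nonpos (by positivity) (by linarith) (by linarith)
    have h4 : (t^2:ℝ) ^ (-r) = t ^ (-(2*r)) := by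
      rw [← Real.rpow_natCast t 2, ← Real.rpow_mul ht0.le]
      norm_num
    calc t ^ c * (t^2+1) ^ (-r) ≤ t ^ c * t ^ (-(2*r)) := by
          rw [← h4]; exact mul_le_mul_of_nonneg_left h3 (Real.rpow_nonneg ht0.le c)
      _ = t ^ (c - 2*r) := by rw [← Real.rpow_add ht0]; ring_nf

lemma sqrt_zpow_eq (u : ℝ) (hu : 0 < u) (k : ℤ) (r : ℝ) (hk : (k:ℝ) = 2*r) :
    Real.sqrt u ^ (-k) = u ^ (-r) := by
  rw [← Real.rpow_intCast (Real.sqrt u) (-k), Real.sqrt_eq_rpow, ← Real.rpow_mul hu.le]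
  congr 1
  push_cast [hk]; ring

/-- The core AM-GM estimate. -/
lemma core_ineq (r b t : ℝ) (hr : 1 ≤ r) (ht : 0 < t) (hb : b ≠ 0) (hb1 : b + 1 ≠ 0) :
    |1+b| ^ (-(2*r)) * (t^2 + (b/(b+1))^2) ^ (-r) * t ^ r ≤ |2*b*(b+1)| ^ (-r) := by
  set A : ℝ := (1+b)^2 with hA_def
  set B : ℝ := t^2 + (b/(b+1))^2 with hB_def
  set M : ℝ := |2*b*(b+1)| with hM_def
  have hA : 0 < A := by
    have : (1:ℝ)+b ≠ 0 := by intro h; apply hb1; linarith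
    positivity
  have hB : 0 < B := by positivity
  have hM : 0 < M := abs_pos.2 (by simp [hb, hb1])
  have hr0 : (0:ℝ) ≤ r := by linarith
  have hAB : A * B = (1+b)^2 * t^2 + b^2 := by
    rw [hA_def, hB_def]; field_simp; ring
  have base : M * t ≤ A * B := by
    have e1 : M * t = 2 * (|1 + b| * t) * |b| := by
      rw [hM_def, abs_mul, abs_mul, _root_.abs_two,
        show |b + 1| = |1 + b| from by rw [add_comm]]
      ring
    have e2 : 2 * (|1 + b| * t) * |b| ≤ (|1 + b| * t)^2 + |b|^2 :=
      two_mul_le_add_sq _ _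
    rw [e1, hAB]
    calc 2 * (|1 + b| * t) * |b| ≤ (|1 + b| * t)^2 + |b|^2 := e2
      _ = (1+b)^2 * t^2 + b^2 := by rw [mul_pow, _root_.sq_abs, _root_.sq_abs]
  have h1 : |1+b| ^ (-(2*r)) = A ^ (-r) := by
    rw [hA_def, ← _root_.sq_abs, ← Real.rpow_natCast |1+b| 2,
      ← Real.rpow_mul (abs_nonneg _)]
    norm_num
  have key : M ^ r * t ^ r ≤ (A*B) ^ r := by
    rw [← Real.mul_rpow hM.le ht.le]
    exact Real.rpow_le_rpow (by positivity) base hr0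
  rw [h1, ← Real.mul_rpow hA.le hB.le,
    Real.rpow_neg (by positivity : (0:ℝ) ≤ A*B), Real.rpow_neg (by positivity : (0:ℝ) ≤ M),
    inv_mul_eq_div, ← one_div, div_le_div_iff₀ (by positivity) (by positivity)]
  calc t ^ r * M ^ r ≤ (A*B)^r := by rw [mul_comm]; exact key
    _ = 1 * (A*B)^r := by ring

/-- Norm of the complex integrand. -/
lemma norm_integrand (k : ℤ) (r b t : ℝ) (hk : (k:ℝ) = 2*r) (ht : 0 < t) (hb1 : b + 1 ≠ 0) :
    ‖((t:ℂ)+I)^(-k) * ((t:ℂ)+(b:ℂ)*I/((b:ℂ)+1))^(-k) * (t:ℂ)^(k-1)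
        * ((Real.log t : ℝ):ℂ)‖ =
      (t^2+1)^(-r) * (t^2+(b/(b+1))^2)^(-r) * t^(2*r-1) * |Real.log t| := by
  have e1 : ‖((t:ℂ)+I)^(-k)‖ = (t^2+1) ^ (-r) := by
    rw [norm_zpow, show ((t:ℂ)+I) = (t:ℂ) + ((1:ℝ):ℂ)*I by push_cast; ring,
      Complex.norm_add_mul_I]
    rw [show t^2 + (1:ℝ)^2 = t^2+1 by ring]
    exact sqrt_zpow_eq _ (by positivity) k r hk
  have e2 : ‖((t:ℂ)+(b:ℂ)*I/((b:ℂ)+1))^(-k)‖ = (t^2+(b/(b+1))^2) ^ (-r) := by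
    rw [norm_zpow, show ((t:ℂ)+(b:ℂ)*I/((b:ℂ)+1)) = (t:ℂ) + ((b/(b+1):ℝ):ℂ)*I by
      push_cast; field_simp, Complex.norm_add_mul_I]
    exact sqrt_zpow_eq _ (by positivity) k r hk
  have e3 : ‖(t:ℂ)^(k-1)‖ = t ^ (2*r-1) := by
    rw [norm_zpow, Complex.norm_real, Real.norm_eq_abs, _root_.abs_of_pos ht,
      ← Real.rpow_intCast t (k-1)]
    congr 1
    push_cast [hk]; ring
  rw [norm_mul, norm_mul, norm_mul, e1, e2, e3, Complex.norm_real, Real.norm_eq_abs]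

theorem statement18 (l : ℤ) (hleven : Even l) (hl : 4 < l) :
    IntegrableOn
      (fun t : ℝ => t ^ ((l : ℝ) / 4) * (t ^ 2 + 1) ^ (-(l : ℝ) / 4) * |Real.log t| / t)
      (Set.Ioi (0 : ℝ)) volume ∧
    ∀ b : ℝ, b ≠ 0 → b ≠ -1 →
      ‖Wplus l b‖ ≤
        |2 * b * (b + 1)| ^ (-(l : ℝ) / 4) *
          ∫ t in Set.Ioi (0 : ℝ),
            t ^ ((l : ℝ) / 4) * (t ^ 2 + 1) ^ (-(l : ℝ) / 4) * |Real.log t| / t := by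
  have hl4 : (4:ℝ) < (l:ℝ) := by exact_mod_cast hl
  simp only [neg_div]
  set r : ℝ := (l:ℝ)/4 with hr_def
  have hr1 : 1 < r := by rw [hr_def]; linarith
  have hr0 : (0:ℝ) ≤ r := by linarith
  set g : ℝ → ℝ := fun t => t ^ r * (t^2+1) ^ (-r) * |Real.log t| / t with hg_def
  -- integrability of g
  have hgint : IntegrableOn g (Set.Ioi 0) := by
    have hcont : ContinuousOn g (Set.Ioi 0) := by
      rw [hg_def]
      apply ContinuousOn.div _ continuousOn_id (fun x hx => ne_of_gt hx)
      apply ContinuousOn.mul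
      apply ContinuousOn.mul
      · exact ContinuousOn.rpow_const continuousOn_id fun x hx => Or.inl (ne_of_gt hx)
      · exact ContinuousOn.rpow_const (by fun_prop) fun x hx => Or.inl (by positivity)
      · exact (Real.continuousOn_log.mono (by
          intro x hx; simpa using ne_of_gt (α := ℝ) hx)).abs
    have i1 : IntegrableOn (fun t : ℝ => t ^ (r-1/2) * (t^2+1) ^ (-r)) (Set.Ioi 0) :=
      integrable_aux r (r-1/2) hr0 (by linarith) (by linarith)
    have i2 : IntegrableOn (fun t : ℝ => t ^ (r-3/2) * (t^2+1) ^ (-r)) (Set.Ioi 0) :=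
      integrable_aux r (r-3/2) hr0 (by linarith) (by linarith)
    apply Integrable.mono' (((i1.const_mul 2).add (i2.const_mul 2)))
      (hcont.aestronglyMeasurable measurableSet_Ioi)
    filter_upwards [ae_restrict_mem measurableSet_Ioi] with t ht
    have ht0 : (0:ℝ) < t := ht
    have hg0 : g t = t^(r-1) * ((t^2+1)^(-r) * |Real.log t|) := by
      rw [hg_def, Real.rpow_sub ht0, Real.rpow_one]; ring
    have hlog := abs_log_le t ht0
    rw [Real.norm_eq_abs, _root_.abs_of_nonneg (by rw [hg_def]; positivity), hg0]
    calc t^(r-1) * ((t^2+1)^(-r) * |Real.log t|)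
        ≤ t^(r-1) * ((t^2+1)^(-r) * (2 * (t ^ (1/2:ℝ) + t ^ (-(1/2):ℝ)))) := by
          gcongr <;> positivity
      _ = 2 * (t ^ (r-1/2) * (t^2+1)^(-r)) + 2 * (t ^ (r-3/2) * (t^2+1)^(-r)) := by
          rw [show t^(r-1/2:ℝ) = t^(r-1) * t^(1/2:ℝ) from by
                rw [← Real.rpow_add ht0]; congr 1; ring,
              show t^(r-3/2:ℝ) = t^(r-1) * t^(-(1/2):ℝ) from by
                rw [← Real.rpow_add ht0]; congr 1; ring]
          ring
  refine ⟨hgint, ?_⟩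
  intro b hb hbm1
  have hb1 : b + 1 ≠ 0 := fun h => hbm1 (by linarith)
  set k : ℤ := l / 2 with hk_def
  have hk2 : 2 * k = l := Int.two_mul_ediv_two_of_even hleven
  have hkr : (k:ℝ) = 2*r := by
    have : (2:ℝ) * (k:ℝ) = (l:ℝ) := by exact_mod_cast hk2
    rw [hr_def]; linarith
  set C1 : ℝ := |1+b| ^ (-(2*r)) with hC1_def
  set C2 : ℝ := |2*b*(b+1)| ^ (-r) with hC2_def
  have hC1nn : 0 ≤ C1 := Real.rpow_nonneg (abs_nonneg _) _
  have hC2nn : 0 ≤ C2 := Real.rpow_nonneg (abs_nonneg _) _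
  set f : ℝ → ℂ := fun t =>
    ((t:ℂ)+I)^(-k) * ((t:ℂ)+(b:ℂ)*I/((b:ℂ)+1))^(-k) * (t:ℂ)^(k-1) * ((Real.log t : ℝ):ℂ)
    with hf_def
  have habsW : ‖Wplus l b‖ = C1 * ‖∫ t in Set.Ioi (0:ℝ), f t‖ := by
    rw [Wplus, ← hk_def, norm_mul, norm_mul, norm_zpow, Complex.norm_I, one_zpow, one_mul,
      norm_zpow, show ((1:ℂ)+(b:ℂ)) = ((1+b : ℝ):ℂ) by push_cast; ring, Complex.norm_real, Real.norm_eq_abs,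
      hC1_def, ← Real.rpow_intCast |1+b| (-k)]
    congr 2
    push_cast [hkr]; ring
  rw [habsW]
  calc C1 * ‖∫ t in Set.Ioi (0:ℝ), f t‖
      ≤ C1 * ∫ t in Set.Ioi (0:ℝ), ‖f t‖ := by
        exact mul_le_mul_of_nonneg_left (norm_integral_le_integral_norm _) hC1nn
    _ = ∫ t in Set.Ioi (0:ℝ), C1 * ‖f t‖ := (integral_const_mul _ _).symm
    _ ≤ ∫ t in Set.Ioi (0:ℝ), C2 * g t := by
        apply integral_mono_of_nonneg
        · exact Filter.Eventually.of_forall fun t => by positivity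
        · exact hgint.const_mul C2
        · filter_upwards [ae_restrict_mem measurableSet_Ioi] with t ht
          have ht0 : (0:ℝ) < t := ht
          have hnorm : ‖f t‖ =
              (t^2+1)^(-r) * (t^2+(b/(b+1))^2)^(-r) * t^(2*r-1) * |Real.log t| := by
            rw [hf_def]
            exact norm_integrand k r b t hkr ht0 hb1
          have core := core_ineq r b t hr1.le ht0 hb hb1
          have hg0 : g t = t^(r-1) * ((t^2+1)^(-r) * |Real.log t|) := by
            rw [hg_def, Real.rpow_sub ht0, Real.rpow_one]; ring
          have e1 : t^(2*r-1) = t^r * t^(r-1) := by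
            rw [← Real.rpow_add ht0]; congr 1; ring
          rw [hnorm, hg0, e1]
          calc C1 * ((t^2+1)^(-r) * (t^2+(b/(b+1))^2)^(-r) * (t^r * t^(r-1)) * |Real.log t|)
              = (C1 * (t^2+(b/(b+1))^2)^(-r) * t^r) *
                  (t^(r-1) * ((t^2+1)^(-r) * |Real.log t|)) := by ring
            _ ≤ C2 * (t^(r-1) * ((t^2+1)^(-r) * |Real.log t|)) :=
                mul_le_mul_of_nonneg_right core (by positivity)
    _ = C2 * ∫ t in Set.Ioi (0:ℝ), g t := integral_const_mul _ _

end Stmt18
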